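/- Let ω be a smooth n-form on an open set U ⊆ ℝⁿ and x ∈ U. Then ω has constant coefficients on a neighbourhood of x if and only if either ω vanishes identically on some neighbourhood of x, or ω_x ≠ 0. -/

import Mathlib

open Set Function MeasureTheory Metric
open scoped Convolution Topology

/-- Constant coefficients for a `p`-form (see context). -/
def HasConstantCoefficientsFormAt (n p : ℕ) (U : Set (Fin n → ℝ))
    (ω : (Fin n → ℝ) → ((Fin n → ℝ) [×p]→L[ℝ] ℝ)) (x : Fin n → ℝ) : Prop :=
  ∃ V : Set (Fin n → ℝ), IsOpen V ∧ x ∈ V ∧ V ⊆ U ∧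
    ∃ u : (Fin n → ℝ) → (Fin n → ℝ),
      ContDiffOn ℝ (⊤ : ℕ∞) u V ∧ Set.InjOn u V ∧ IsOpen (u '' V) ∧
      (∀ y ∈ V, Function.Bijective (fderiv ℝ u y)) ∧
      ∃ c : (Fin n → ℝ) [×p]→L[ℝ] ℝ,
        ∀ y ∈ V, ∀ v : Fin p → (Fin n → ℝ),
          ω y v = c (fun i => fderiv ℝ u y (v i))

theorem aux_update_eq {n : ℕ} (i0 : Fin n) (p : Fin n → ℝ) (t : ℝ) :
    Function.update p i0 t = p + (t - p i0) • (Pi.single i0 1 : Fin n → ℝ) := by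
  funext j
  rcases eq_or_ne j i0 with h | h
  · subst h; simp
  · simp [Function.update_of_ne h, Pi.single_apply, h]

theorem aux_update_add {n : ℕ} (i0 : Fin n) (p : Fin n → ℝ) (s t : ℝ) :
    Function.update (p + s • (Pi.single i0 1 : Fin n → ℝ)) i0 t = Function.update p i0 t := by
  funext j
  rcases eq_or_ne j i0 with h | h
  · subst h; simp
  · simp [Function.update_of_ne h, Pi.single_apply, h]

/-- Representation of an alternating top-degree form via the determinant. -/
theorem aux_rep {n : ℕ} (ω : (Fin n → ℝ) [×n]→L[ℝ] ℝ)
    (halt : ∀ v : Fin n → (Fin n → ℝ), ∀ i j, i ≠ j → v i = v j → ω v = 0)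
    (v : Fin n → (Fin n → ℝ)) :
    ω v = ω ⇑(Pi.basisFun ℝ (Fin n)) * (Pi.basisFun ℝ (Fin n)).det v := by
  classical
  let A : (Fin n → ℝ) [⋀^Fin n]→ₗ[ℝ] ℝ :=
    { toMultilinearMap :=
        (ω : ContinuousMultilinearMap ℝ (fun _ : Fin n => (Fin n → ℝ)) ℝ).toMultilinearMap
      map_eq_zero_of_eq' := fun v i j hv hij => halt v i j hij hv }
  have hA := A.eq_smul_basis_det (Pi.basisFun ℝ (Fin n))
  have h1 : A v = (A ⇑(Pi.basisFun ℝ (Fin n)) • (Pi.basisFun ℝ (Fin n)).det) v := by rw [← hA]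
  simpa [A, AlternatingMap.smul_apply, smul_eq_mul] using h1

/-- A continuous linear endomorphism with nonzero determinant is bijective. -/
theorem aux_bij {n : ℕ} (T : (Fin n → ℝ) →L[ℝ] (Fin n → ℝ))
    (h : LinearMap.det (T : (Fin n → ℝ) →ₗ[ℝ] (Fin n → ℝ)) ≠ 0) :
    Function.Bijective ⇑T := by
  have hb := (LinearMap.equivOfDetNeZero _ h).bijective
  have hc : ⇑(LinearMap.equivOfDetNeZero ((T : (Fin n → ℝ) →ₗ[ℝ] (Fin n → ℝ))) h) = ⇑T := by
    funext v
    exact DFunLike.congr_fun (LinearEquiv.coe_ofIsUnitDet _) v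
  rwa [hc] at hb

/-- Determinant of a shear-type map. -/
theorem aux_det {n : ℕ} (hn : 0 < n) (T : (Fin n → ℝ) →L[ℝ] (Fin n → ℝ))
    (ℓ : (Fin n → ℝ) →L[ℝ] ℝ)
    (hT : ∀ v, T v = v + ℓ v • (Pi.single (⟨0, hn⟩ : Fin n) 1 : Fin n → ℝ)) :
    LinearMap.det (T : (Fin n → ℝ) →ₗ[ℝ] (Fin n → ℝ)) =
      1 + ℓ (Pi.single (⟨0, hn⟩ : Fin n) 1 : Fin n → ℝ) := by
  classical
  set i0 : Fin n := ⟨0, hn⟩ with hi0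
  set bas := Pi.basisFun ℝ (Fin n) with hbas
  rw [← LinearMap.det_toMatrix bas]
  set Mx := LinearMap.toMatrix bas bas (T : (Fin n → ℝ) →ₗ[ℝ] (Fin n → ℝ)) with hMx
  have hMxa : ∀ i j, Mx i j = T (Pi.single j 1) i := by
    intro i j
    rw [hMx, LinearMap.toMatrix_apply]
    simp [hbas, Pi.basisFun_repr, Pi.basisFun_apply]
  have htri : Mx.BlockTriangular id := by
    intro i j hij
    have hii0 : i ≠ i0 := by
      intro h
      rw [h] at hij
      exact Nat.not_lt_zero j.1 (by simpa [hi0, Fin.lt_def] using hij)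
    have hij' : i ≠ j := (ne_of_gt hij)
    rw [hMxa, hT]
    simp [Pi.single_apply, hii0, hij']
  rw [Matrix.det_of_upperTriangular htri]
  have hprod : ∏ i, Mx i i = Mx i0 i0 := by
    apply Finset.prod_eq_single i0
    · intro i _ hi
      rw [hMxa, hT]
      simp [Pi.single_apply, hi]
    · simp
  rw [hprod, hMxa, hT]
  simp [Pi.single_apply]

/-- Existence of a smooth "primitive in direction `i0`" of a compactly supported function. -/
theorem aux_primitive {n : ℕ} (i0 : Fin n) (x : Fin n → ℝ) (ε : ℝ) (hε : 0 < ε)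
    (ft : (Fin n → ℝ) → ℝ) (hft : ContDiff ℝ (⊤ : ℕ∞) ft)
    (hsupp : ∀ z, z ∉ Metric.closedBall x ε → ft z = 0) :
    ∃ F : (Fin n → ℝ) → ℝ, ContDiff ℝ (⊤ : ℕ∞) F ∧
      ∀ y : Fin n → ℝ, y i0 < x i0 + ε + 1 →
        fderiv ℝ F y (Pi.single i0 1 : Fin n → ℝ) = ft y := by
  classical
  set e : Fin n → ℝ := Pi.single i0 1 with he
  set M : ℝ := x i0 + ε + 1 with hM
  set g : (Fin n → ℝ) → ℝ → ℝ := fun p t => ft (Function.update p i0 t) with hgdef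
  have hgsupp : ∀ p, ∀ t, t ∉ Set.Icc (x i0 - ε) (x i0 + ε) → g p t = 0 := by
    intro p t ht
    apply hsupp
    intro hc
    apply ht
    have h1 : dist (Function.update p i0 t i0) (x i0) ≤ dist (Function.update p i0 t) x :=
      dist_le_pi_dist _ _ _
    rw [Function.update_self] at h1
    have h2 : dist t (x i0) ≤ ε := h1.trans (mem_closedBall.1 hc)
    rw [Real.dist_eq, abs_sub_le_iff] at h2
    rw [Set.mem_Icc]
    constructor <;> linarith [h2.1, h2.2]
  have hgC : ContDiff ℝ (⊤ : ℕ∞) ↿g := by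
    have heq : ↿g = fun q : (Fin n → ℝ) × ℝ => ft (q.1 + (q.2 - q.1 i0) • e) := by
      funext q
      show ft _ = ft _
      rw [aux_update_eq]
    rw [heq]
    exact hft.comp (contDiff_fst.add ((contDiff_snd.sub
      ((ContinuousLinearMap.proj i0 : (Fin n → ℝ) →L[ℝ] ℝ).contDiff.comp
        contDiff_fst)).smul contDiff_const))
  have hgcont : ∀ p, Continuous (g p) := fun p =>
    hgC.continuous.comp (Continuous.prodMk_right p)
  set kf : ℝ → ℝ := Set.indicator (Set.Iic (0 : ℝ)) (fun _ => (1 : ℝ)) with hkf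
  have hkfLI : LocallyIntegrable kf volume :=
    (locallyIntegrable_const (1 : ℝ)).indicator measurableSet_Iic
  set L : ℝ →L[ℝ] ℝ →L[ℝ] ℝ := ContinuousLinearMap.mul ℝ ℝ with hL
  set Ψ : (Fin n → ℝ) → ℝ → ℝ := fun p z => (kf ⋆[L, volume] g p) z with hΨ
  have hΦ : ContDiff ℝ (⊤ : ℕ∞) (fun q : (Fin n → ℝ) × ℝ => Ψ q.1 q.2) := by
    have h := contDiffOn_convolution_right_with_param (μ := volume) L isOpen_univ isCompact_Icc
      (fun p t _ ht => hgsupp p t ht) hkfLI (hgC.contDiffOn)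
    rw [Set.univ_prod_univ, contDiffOn_univ] at h
    exact h
  have hΨ1 : ∀ p z, Ψ p z = ∫ s in Set.Ici z, g p s := by
    intro p z
    have h1 : ∀ t : ℝ, (L (kf t)) (g p (z - t)) = Set.indicator (Set.Ici z) (g p) (z - t) := by
      intro t
      simp only [hL, ContinuousLinearMap.mul_apply']
      by_cases ht : t ≤ 0
      · have hmem : z - t ∈ Set.Ici z := by rw [Set.mem_Ici]; linarith
        rw [Set.indicator_of_mem hmem, hkf,
          Set.indicator_of_mem (Set.mem_Iic.2 ht), one_mul]
      · have hmem : z - t ∉ Set.Ici z := by rw [Set.mem_Ici]; intro h; linarith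
        rw [Set.indicator_of_notMem hmem, hkf,
          Set.indicator_of_notMem (fun h => ht (Set.mem_Iic.1 h)), zero_mul]
    calc Ψ p z = ∫ t, (L (kf t)) (g p (z - t)) ∂volume := convolution_def _
      _ = ∫ t, Set.indicator (Set.Ici z) (g p) (z - t) ∂volume :=
          integral_congr_ae (Filter.Eventually.of_forall h1)
      _ = ∫ s, Set.indicator (Set.Ici z) (g p) s ∂volume :=
          integral_sub_left_eq_self _ volume z
      _ = ∫ s in Set.Ici z, g p s := integral_indicator measurableSet_Ici
  have hΨ3 : ∀ p z, z ≤ M → Ψ p z = ∫ t in z..M, g p t := by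
    intro p z hzM
    have hcs : HasCompactSupport (g p) :=
      HasCompactSupport.intro isCompact_Icc (fun t ht => hgsupp p t ht)
    have hInt : Integrable (g p) volume := (hgcont p).integrable_of_hasCompactSupport hcs
    have hdisj : Disjoint (Set.Ioc z M) (Set.Ioi M) := by
      rw [Set.disjoint_left]
      intro a h1 h2
      rw [Set.mem_Ioc] at h1
      rw [Set.mem_Ioi] at h2
      linarith [h1.2]
    rw [hΨ1, integral_Ici_eq_integral_Ioi, ← Set.Ioc_union_Ioi_eq_Ioi hzM,
      setIntegral_union hdisj measurableSet_Ioi hInt.integrableOn hInt.integrableOn]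
    have h0 : ∫ t in Set.Ioi M, g p t = 0 := by
      apply setIntegral_eq_zero_of_forall_eq_zero
      intro t ht
      rw [Set.mem_Ioi] at ht
      apply hgsupp
      rw [Set.mem_Icc]
      intro hmem
      have : M = x i0 + ε + 1 := rfl
      linarith [hmem.2]
    rw [h0, add_zero, intervalIntegral.integral_of_le hzM]
  have hΨind : ∀ (p : Fin n → ℝ) (z s : ℝ), Ψ (p + s • e) z = Ψ p z := by
    intro p z s
    have hgg : g (p + s • e) = g p := by
      funext t
      show ft (Function.update (p + s • e) i0 t) = ft (Function.update p i0 t)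
      rw [he, aux_update_add]
    show (kf ⋆[L, volume] g (p + s • e)) z = (kf ⋆[L, volume] g p) z
    rw [hgg]
  refine ⟨fun y => Ψ y (x i0) - Ψ y (y i0), ?_, ?_⟩
  · exact (hΦ.comp (contDiff_id.prodMk contDiff_const)).sub
      (hΦ.comp (contDiff_id.prodMk
        (ContinuousLinearMap.proj i0 : (Fin n → ℝ) →L[ℝ] ℝ).contDiff))
  · intro y hyM
    set F : (Fin n → ℝ) → ℝ := fun y => Ψ y (x i0) - Ψ y (y i0) with hF
    have hFC : ContDiff ℝ (⊤ : ℕ∞) F :=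
      (hΦ.comp (contDiff_id.prodMk contDiff_const)).sub
        (hΦ.comp (contDiff_id.prodMk
          (ContinuousLinearMap.proj i0 : (Fin n → ℝ) →L[ℝ] ℝ).contDiff))
    have h1le : (1 : WithTop ℕ∞) ≤ ((⊤ : ℕ∞) : WithTop ℕ∞) := by
      exact_mod_cast (le_top : (1 : ℕ∞) ≤ ⊤)
    have hline : HasDerivAt (fun s : ℝ => F (y + s • e)) (fderiv ℝ F y e) 0 := by
      have h2 : HasDerivAt (fun s : ℝ => y + s • e) e 0 := by
        simpa using ((hasDerivAt_id (0 : ℝ)).smul_const e).const_add y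
      have h1 : HasFDerivAt F (fderiv ℝ F y) ((fun s : ℝ => y + s • e) 0) := by
        simpa using ((hFC.differentiable (by simp)) y).hasFDerivAt
      exact h1.comp_hasDerivAt 0 h2
    have heq : (fun s : ℝ => F (y + s • e)) = fun s => Ψ y (x i0) - Ψ y (y i0 + s) := by
      funext s
      have h4 : (y + s • e) i0 = y i0 + s := by simp [he]
      show Ψ (y + s • e) (x i0) - Ψ (y + s • e) ((y + s • e) i0) = _
      rw [h4, hΨind y (x i0) s, hΨind y (y i0 + s) s]
    have hder2 : HasDerivAt (fun s : ℝ => Ψ y (x i0) - Ψ y (y i0 + s)) (ft y) 0 := by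
      have H : HasDerivAt (fun z : ℝ => Ψ y z) (-(ft y)) (y i0) := by
        have hloc : (fun z : ℝ => Ψ y z) =ᶠ[𝓝 (y i0)] fun z => ∫ t in z..M, g y t :=
          Filter.eventually_of_mem (Iio_mem_nhds hyM) (fun z hz => hΨ3 y z (le_of_lt hz))
        have hFTC : HasDerivAt (fun z => ∫ t in z..M, g y t) (-(g y (y i0))) (y i0) :=
          intervalIntegral.integral_hasDerivAt_left
            ((hgcont y).intervalIntegrable _ _)
            ((hgcont y).stronglyMeasurableAtFilter _ _)
            (hgcont y).continuousAt
        have hgy : g y (y i0) = ft y := by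
          show ft _ = ft y
          rw [Function.update_eq_self]
        rw [hgy] at hFTC
        exact hFTC.congr_of_eventuallyEq hloc
      have h5 : HasDerivAt (fun s : ℝ => y i0 + s) 1 0 := by
        simpa using (hasDerivAt_id (0 : ℝ)).const_add (y i0)
      have H' : HasDerivAt (fun z : ℝ => Ψ y z) (-(ft y)) ((fun s : ℝ => y i0 + s) 0) := by
        simpa using H
      have h6 := (H'.comp 0 h5).const_sub (Ψ y (x i0))
      simpa using h6
    rw [heq] at hline
    exact hline.unique hder2

theorem aux_hard (n : ℕ) (U : Set (Fin n → ℝ)) (hU : IsOpen U)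
    (ω : (Fin n → ℝ) → ((Fin n → ℝ) [×n]→L[ℝ] ℝ))
    (hω : ContDiffOn ℝ (⊤ : ℕ∞) ω U)
    (halt : ∀ y ∈ U, ∀ v : Fin n → (Fin n → ℝ), ∀ i j, i ≠ j → v i = v j → ω y v = 0)
    (x : Fin n → ℝ) (hx : x ∈ U) (hne : ω x ≠ 0) :
    HasConstantCoefficientsFormAt n n U ω x := by
  classical
  rcases Nat.eq_zero_or_pos n with hn0 | hn
  · subst hn0
    refine ⟨U, hU, hx, subset_rfl, id, contDiffOn_id, Set.injOn_id _, by rwa [Set.image_id],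
      ?_, ω x, ?_⟩
    · intro y hy
      rw [fderiv_id]
      exact Function.bijective_id
    · intro y hy v
      have hyx : y = x := funext fun i => i.elim0
      subst hyx
      exact congrArg (ω y) (funext fun i => i.elim0)
  · set i0 : Fin n := ⟨0, hn⟩ with hi0
    set e : Fin n → ℝ := Pi.single i0 1 with he
    set bas := Pi.basisFun ℝ (Fin n) with hbas
    set f : (Fin n → ℝ) → ℝ := fun y => ω y ⇑bas with hf
    have hrep : ∀ y ∈ U, ∀ v, ω y v = f y * bas.det v := fun y hy v =>
      aux_rep (ω y) (halt y hy) v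
    have hfx : f x ≠ 0 := by
      intro h0
      apply hne
      ext v
      rw [hrep x hx v, h0, zero_mul]
      rfl
    have hfC : ContDiffOn ℝ (⊤ : ℕ∞) f U :=
      (ContinuousMultilinearMap.apply ℝ (fun _ : Fin n => (Fin n → ℝ)) ℝ
        ⇑bas).contDiff.comp_contDiffOn hω
    obtain ⟨ε, hε0, hεU⟩ : ∃ ε > 0, closedBall x ε ⊆ U :=
      nhds_basis_closedBall.mem_iff.mp (hU.mem_nhds hx)
    set χ : ContDiffBump x := ⟨ε / 2, ε, by positivity, by linarith⟩ with hχ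
    set ft : (Fin n → ℝ) → ℝ := fun y => χ y * f y with hft
    have hftC : ContDiff ℝ (⊤ : ℕ∞) ft := by
      rw [contDiff_iff_contDiffAt]
      intro y
      by_cases hyU : y ∈ U
      · exact (χ.contDiff.contDiffAt).mul (hfC.contDiffAt (hU.mem_nhds hyU))
      · have hy' : y ∉ tsupport ⇑χ := by
          intro h
          rw [χ.tsupport_eq] at h
          exact hyU (hεU h)
        have hz : ft =ᶠ[𝓝 y] 0 := by
          filter_upwards [notMem_tsupport_iff_eventuallyEq.1 hy'] with z hz
          simp only [hft, hz, Pi.zero_apply, zero_mul]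
        exact (contDiffAt_const (c := (0 : ℝ))).congr_of_eventuallyEq hz
    have hftsupp : ∀ z, z ∉ Metric.closedBall x ε → ft z = 0 := by
      intro z hz
      have : χ z = 0 := by
        by_contra h
        exact hz (ball_subset_closedBall (χ.support_eq ▸ Function.mem_support.2 h))
      simp only [hft, this, zero_mul]
    have hfteq : ∀ y ∈ Metric.closedBall x (ε / 2), ft y = f y := by
      intro y hy
      simp only [hft, χ.one_of_mem_closedBall hy, one_mul]
    obtain ⟨F, hFC, hFd⟩ := aux_primitive i0 x ε hε0 ft hftC hftsupp
    have h1le : (1 : WithTop ℕ∞) ≤ ((⊤ : ℕ∞) : WithTop ℕ∞) := by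
      exact_mod_cast (le_top : (1 : ℕ∞) ≤ ⊤)
    set b : ℝ := (f x)⁻¹ with hb
    set u : (Fin n → ℝ) → (Fin n → ℝ) := fun y => y + (b * F y - y i0) • e with hu
    have huC : ContDiff ℝ (⊤ : ℕ∞) u :=
      contDiff_id.add (((contDiff_const.mul hFC).sub
        (ContinuousLinearMap.proj i0 : (Fin n → ℝ) →L[ℝ] ℝ).contDiff).smul contDiff_const)
    set pr : (Fin n → ℝ) →L[ℝ] ℝ := ContinuousLinearMap.proj i0 with hpr
    have hDu : ∀ y, HasFDerivAt u
        (ContinuousLinearMap.id ℝ (Fin n → ℝ) + (b • fderiv ℝ F y - pr).smulRight e) y := by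
      intro y
      have h1 : HasFDerivAt (fun y : Fin n → ℝ => b * F y - y i0)
          (b • fderiv ℝ F y - pr) y :=
        (((hFC.differentiable (by simp)) y).hasFDerivAt.const_mul b).sub pr.hasFDerivAt
      exact (hasFDerivAt_id y).add (h1.smul_const e)
    have hTapp : ∀ y v, fderiv ℝ u y v = v + (b * fderiv ℝ F y v - v i0) • e := by
      intro y v
      rw [(hDu y).fderiv]
      simp [ContinuousLinearMap.smulRight_apply, hpr, smul_eq_mul]
    -- the good neighbourhood
    set S : Set (Fin n → ℝ) := ball x (ε / 2) ∩ {y | ft y ≠ 0} with hS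
    have hSopen : IsOpen S :=
      isOpen_ball.inter (isOpen_compl_singleton.preimage hftC.continuous)
    have hxS : x ∈ S := by
      constructor
      · exact mem_ball_self (by positivity)
      · show ft x ≠ 0
        rw [hfteq x (mem_closedBall_self (by positivity))]
        exact hfx
    have hSU : S ⊆ U := fun y hy =>
      hεU ((closedBall_subset_closedBall (by linarith)) (ball_subset_closedBall hy.1))
    have hSM : ∀ y ∈ S, y i0 < x i0 + ε + 1 := by
      intro y hy
      have h1 : dist (y i0) (x i0) ≤ dist y x := dist_le_pi_dist _ _ _
      have h2 : dist y x < ε / 2 := mem_ball.1 hy.1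
      have h3 : y i0 - x i0 ≤ |y i0 - x i0| := le_abs_self _
      rw [Real.dist_eq] at h1
      linarith
    have hftf : ∀ y ∈ S, ft y = f y := fun y hy =>
      hfteq y (ball_subset_closedBall hy.1)
    have hdet : ∀ y ∈ S,
        LinearMap.det ((fderiv ℝ u y : (Fin n → ℝ) →L[ℝ] (Fin n → ℝ)) :
          (Fin n → ℝ) →ₗ[ℝ] (Fin n → ℝ)) = b * f y := by
      intro y hy
      have hT : ∀ v, fderiv ℝ u y v =
          v + ((b • fderiv ℝ F y - pr) v) • (Pi.single (⟨0, hn⟩ : Fin n) 1 : Fin n → ℝ) := by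
        intro v
        rw [hTapp y v]
        rfl
      rw [aux_det hn (fderiv ℝ u y) (b • fderiv ℝ F y - pr) hT]
      have hde : fderiv ℝ F y (Pi.single (⟨0, hn⟩ : Fin n) 1 : Fin n → ℝ) = ft y :=
        hFd y (hSM y hy)
      have hei : (Pi.single (⟨0, hn⟩ : Fin n) 1 : Fin n → ℝ) i0 = 1 := by
        rw [hi0]; exact Pi.single_eq_same _ _
      rw [ContinuousLinearMap.sub_apply, ContinuousLinearMap.smul_apply, hde, hpr,
        ContinuousLinearMap.proj_apply, hei, smul_eq_mul, hftf y hy]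
      ring
    have hbijS : ∀ y ∈ S, Function.Bijective ⇑(fderiv ℝ u y) := by
      intro y hy
      apply aux_bij
      rw [hdet y hy]
      exact mul_ne_zero (inv_ne_zero hfx) (by rw [← hftf y hy]; exact hy.2)
    have hident : ∀ y ∈ S, ∀ v : Fin n → (Fin n → ℝ),
        ω y v = ω x (fun i => fderiv ℝ u y (v i)) := by
      intro y hy v
      rw [hrep y (hSU hy) v, hrep x hx (fun i => fderiv ℝ u y (v i))]
      have hcomp : bas.det (fun i => fderiv ℝ u y (v i)) =
          bas.det (((fderiv ℝ u y : (Fin n → ℝ) →L[ℝ] (Fin n → ℝ)) :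
            (Fin n → ℝ) →ₗ[ℝ] (Fin n → ℝ)) ∘ v) := rfl
      rw [hcomp, Module.Basis.det_comp, hdet y hy, hb,
        mul_assoc ((f x)⁻¹), ← mul_assoc (f x), mul_inv_cancel₀ hfx, one_mul]
    -- inverse function theorem at x
    have hdx : LinearMap.det ((fderiv ℝ u x : (Fin n → ℝ) →L[ℝ] (Fin n → ℝ)) :
        (Fin n → ℝ) →ₗ[ℝ] (Fin n → ℝ)) ≠ 0 := by
      rw [hdet x hxS]
      exact mul_ne_zero (inv_ne_zero hfx) hfx
    set eqx : (Fin n → ℝ) ≃ₗ[ℝ] (Fin n → ℝ) := LinearMap.equivOfDetNeZero _ hdx with heqx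
    set eqcx : (Fin n → ℝ) ≃L[ℝ] (Fin n → ℝ) := eqx.toContinuousLinearEquiv with heqcx
    have hcoe : (eqcx : (Fin n → ℝ) →L[ℝ] (Fin n → ℝ)) = fderiv ℝ u x := by
      refine ContinuousLinearMap.ext fun v => ?_
      show eqx v = fderiv ℝ u x v
      rw [heqx]
      exact DFunLike.congr_fun (LinearEquiv.coe_ofIsUnitDet _) v
    have hstrict : HasStrictFDerivAt u ((eqcx : (Fin n → ℝ) →L[ℝ] (Fin n → ℝ))) x := by
      rw [hcoe]
      exact (huC.contDiffAt).hasStrictFDerivAt (by simp)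
    set φH := HasStrictFDerivAt.toOpenPartialHomeomorph (f := u) hstrict with hφH
    have hφcoe : ⇑φH = u := HasStrictFDerivAt.toOpenPartialHomeomorph_coe hstrict
    refine ⟨φH.source ∩ S, φH.open_source.inter hSopen,
      ⟨HasStrictFDerivAt.mem_toOpenPartialHomeomorph_source hstrict, hxS⟩,
      (Set.inter_subset_right).trans hSU, u, huC.contDiffOn, ?_, ?_, ?_, ω x, ?_⟩
    · have h := φH.injOn
      rw [hφcoe] at h
      exact h.mono Set.inter_subset_left
    · have h := φH.isOpen_image_of_subset_source
        (φH.open_source.inter hSopen) Set.inter_subset_left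
      rwa [hφcoe] at h
    · exact fun y hy => hbijS y hy.2
    · exact fun y hy v => hident y hy.2 v


/-- a smooth `n`-form (top degree) on `U ⊆ ℝⁿ` has constant coefficients
on a neighbourhood of `x ∈ U` if and only if either it vanishes identically on some
neighbourhood of `x`, or `ω_x ≠ 0`. -/
theorem topForm_constantCoefficients_iff (n : ℕ) (U : Set (Fin n → ℝ)) (hU : IsOpen U)
    (ω : (Fin n → ℝ) → ((Fin n → ℝ) [×n]→L[ℝ] ℝ))
    (hω : ContDiffOn ℝ (⊤ : ℕ∞) ω U)
    (halt : ∀ y ∈ U, ∀ v : Fin n → (Fin n → ℝ), ∀ i j, i ≠ j → v i = v j → ω y v = 0)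
    (x : Fin n → ℝ) (hx : x ∈ U) :
    HasConstantCoefficientsFormAt n n U ω x ↔
      ((∃ W : Set (Fin n → ℝ), IsOpen W ∧ x ∈ W ∧ ∀ y ∈ W, ω y = 0) ∨ ω x ≠ 0) := by
  constructor
  · rintro ⟨V, hVo, hxV, hVU, u, hu, huinj, huim, hbij, c, hc⟩
    by_cases h0 : ω x = 0
    · left
      refine ⟨V, hVo, hxV, fun y hy => ?_⟩
      have hc0 : ∀ w : Fin n → (Fin n → ℝ), c w = 0 := by
        intro w
        obtain ⟨-, hsurj⟩ := hbij x hxV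
        have h1 := hc x hxV (fun i => Function.surjInv hsurj (w i))
        have h2 : (fun i => fderiv ℝ u x (Function.surjInv hsurj (w i))) = w :=
          funext fun i => Function.surjInv_eq hsurj (w i)
        rw [h2, h0] at h1
        simpa using h1.symm
      ext v
      rw [hc y hy v, hc0]
      simp
    · right; exact h0
  · rintro (⟨W, hWo, hxW, hW⟩ | hne)
    · refine ⟨W ∩ U, hWo.inter hU, ⟨hxW, hx⟩, Set.inter_subset_right, id,
        contDiffOn_id, Set.injOn_id _, by rw [Set.image_id]; exact hWo.inter hU, ?_, 0, ?_⟩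
      · intro y hy
        rw [fderiv_id]
        exact Function.bijective_id
      · intro y hy v
        rw [hW y hy.1]
        simp
    · exact aux_hard n U hU ω hω halt x hx hne
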